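/- For natural numbers a and b, the number of Young diagrams that fit inside the a × b rectangular box (i.e., Young diagrams all of whose cells (i,j) satisfy i < a and j < b) equals the binomial coefficient C(a + b, a). -/

import Mathlib

/-- Auxiliary: a strictly monotone `ℕ`-valued function on `Fin n` grows at least linearly. -/
lemma aux_strictMono_add {n : ℕ} {f : Fin n → ℕ} (hf : StrictMono f) :
    ∀ (d : ℕ) (i j : Fin n), (i : ℕ) + d = (j : ℕ) → f i + d ≤ f j := by
  intro d
  induction d with
  | zero =>
    intro i j h
    have : i = j := Fin.ext (by simpa using h)
    simp [this]
  | succ d ih =>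
    intro i j h
    have hj' : (i : ℕ) + d < n := by omega
    set j' : Fin n := ⟨(i : ℕ) + d, by omega⟩ with hj'def
    have h1 : f i + d ≤ f j' := ih i j' rfl
    have h2 : f j' < f j := hf (by simp [Fin.lt_def, hj'def]; omega)
    omega

/-- The Young diagram associated to an antitone function `f : Fin a → ℕ` bounded by `b`. -/
def boxDiag {a b : ℕ} (f : Fin a → ℕ) (hf : Antitone f) : YoungDiagram where
  cells := (Finset.range a ×ˢ Finset.range b).filter fun c =>
    if h : c.1 < a then c.2 < f ⟨c.1, h⟩ else False
  isLowerSet := by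
    intro x y hyx hx
    simp only [Finset.coe_filter, Set.mem_setOf_eq, Finset.mem_product, Finset.mem_range] at hx ⊢
    obtain ⟨⟨hx1, hx2⟩, hx3⟩ := hx
    have hy1 : y.1 ≤ x.1 := hyx.1
    have hy2 : y.2 ≤ x.2 := hyx.2
    have hya : y.1 < a := lt_of_le_of_lt hy1 hx1
    refine ⟨⟨hya, lt_of_le_of_lt hy2 hx2⟩, ?_⟩
    rw [dif_pos hx1] at hx3
    rw [dif_pos hya]
    exact lt_of_le_of_lt hy2 (lt_of_lt_of_le hx3 (hf (by simpa [Fin.le_def] using hy1)))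

lemma mem_boxDiag {a b : ℕ} {f : Fin a → ℕ} {hf : Antitone f} {i j : ℕ} :
    (i, j) ∈ boxDiag (b := b) f hf ↔ i < a ∧ j < b ∧ ∃ h : i < a, j < f ⟨i, h⟩ := by
  rw [← YoungDiagram.mem_cells]
  simp only [boxDiag, Finset.mem_filter, Finset.mem_product,
    Finset.mem_range]
  constructor
  · rintro ⟨⟨h1, h2⟩, h3⟩
    rw [dif_pos h1] at h3
    exact ⟨h1, h2, h1, h3⟩
  · rintro ⟨h1, h2, _, h3⟩
    exact ⟨⟨h1, h2⟩, by rw [dif_pos h1]; exact h3⟩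

/-- Box Young diagrams are equivalent to bounded antitone functions. -/
def boxEquiv (a b : ℕ) :
    {μ : YoungDiagram // ∀ c ∈ μ.cells, c.1 < a ∧ c.2 < b} ≃
      {f : Fin a → ℕ // Antitone f ∧ ∀ i, f i ≤ b} where
  toFun μ := ⟨fun i => μ.1.rowLen i,
    fun i j hij => μ.1.rowLen_anti i j (Fin.le_def.mp hij),
    fun i => by
      by_contra h
      push_neg at h
      have hm : ((i : ℕ), b) ∈ μ.1 := YoungDiagram.mem_iff_lt_rowLen.mpr h
      exact absurd (μ.2 _ hm).2 (lt_irrefl b)⟩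
  invFun f := ⟨boxDiag f.1 f.2.1, by
    rintro ⟨i, j⟩ hc
    have := mem_boxDiag.mp hc
    exact ⟨this.1, this.2.1⟩⟩
  left_inv := by
    rintro ⟨μ, hμ⟩
    apply Subtype.ext
    apply YoungDiagram.ext
    ext ⟨i, j⟩
    simp only [YoungDiagram.mem_cells]
    rw [mem_boxDiag]
    constructor
    · rintro ⟨h1, h2, h3, h4⟩
      exact YoungDiagram.mem_iff_lt_rowLen.mpr h4
    · intro h
      have hb := hμ _ h
      exact ⟨hb.1, hb.2, hb.1, YoungDiagram.mem_iff_lt_rowLen.mp h⟩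
  right_inv := by
    rintro ⟨f, hf, hfb⟩
    apply Subtype.ext
    funext i
    simp only
    apply Nat.le_antisymm
    · by_contra h
      push_neg at h
      have : ((i : ℕ), f i) ∈ boxDiag (b := b) f hf := YoungDiagram.mem_iff_lt_rowLen.mpr h
      rw [mem_boxDiag] at this
      obtain ⟨_, _, h', hlt⟩ := this
      simp at hlt
    · by_contra h
      push_neg at h
      have hmem : ((i : ℕ), (boxDiag (b := b) f hf).rowLen i) ∈ boxDiag (b := b) f hf := by
        rw [mem_boxDiag]
        exact ⟨i.2, lt_of_lt_of_le (by simpa using h) (hfb i), i.2, by simpa using h⟩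
      have := YoungDiagram.mem_iff_lt_rowLen.mp hmem
      exact absurd this (lt_irrefl _)

/-- The function underlying `Phi`. -/
noncomputable def phiFun (a b : ℕ) (s : {s : Finset (Fin (a + b)) // s.card = a}) :
    Fin a → ℕ :=
  fun i => (Finset.orderEmbOfFin s.1 s.2 i.rev : ℕ) - (i.rev : ℕ)

lemma phiFun_strictMono (a b : ℕ) (s : {s : Finset (Fin (a + b)) // s.card = a}) :
    StrictMono fun k : Fin a => ((Finset.orderEmbOfFin s.1 s.2 k : Fin (a + b)) : ℕ) :=
  fun x y h => by exact_mod_cast (Finset.orderEmbOfFin s.1 s.2).strictMono h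

lemma phiFun_antitone (a b : ℕ) (s : {s : Finset (Fin (a + b)) // s.card = a}) :
    Antitone (phiFun a b s) := by
  intro i j hij
  have hrev : (j.rev : ℕ) ≤ (i.rev : ℕ) := by
    simp only [Fin.val_rev]
    have := Fin.le_def.mp hij
    omega
  have haux := aux_strictMono_add (phiFun_strictMono a b s)
    ((i.rev : ℕ) - (j.rev : ℕ)) j.rev i.rev (by omega)
  simp only [phiFun]
  omega

lemma phiFun_le (a b : ℕ) (s : {s : Finset (Fin (a + b)) // s.card = a}) (i : Fin a) :
    phiFun a b s i ≤ b := by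
  have ha : 0 < a := i.pos
  set lst : Fin a := ⟨a - 1, by omega⟩ with hlst
  have hlast := aux_strictMono_add (phiFun_strictMono a b s)
    ((a - 1) - (i.rev : ℕ)) i.rev lst (by
      have := i.rev.2
      simp [hlst]
      omega)
  have hbd : ((Finset.orderEmbOfFin s.1 s.2 lst : Fin (a + b)) : ℕ) < a + b :=
    (Finset.orderEmbOfFin s.1 s.2 lst).2
  have hi := i.rev.2
  simp only [phiFun]
  omega

/-- The map from `a`-element subsets of `Fin (a+b)` to bounded antitone functions. -/
noncomputable def Phi (a b : ℕ) (s : {s : Finset (Fin (a + b)) // s.card = a}) :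
    {f : Fin a → ℕ // Antitone f ∧ ∀ i, f i ≤ b} :=
  ⟨phiFun a b s, phiFun_antitone a b s, phiFun_le a b s⟩

lemma Phi_injective (a b : ℕ) : Function.Injective (Phi a b) := by
  intro s t hst
  have hfun : phiFun a b s = phiFun a b t := congrArg Subtype.val hst
  have hee : ∀ k : Fin a, Finset.orderEmbOfFin s.1 s.2 k = Finset.orderEmbOfFin t.1 t.2 k := by
    intro k
    have hk := congrFun hfun k.rev
    simp only [phiFun, Fin.rev_rev] at hk
    have hge : (k : ℕ) ≤ (Finset.orderEmbOfFin s.1 s.2 k : ℕ) := by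
      have := aux_strictMono_add (phiFun_strictMono a b s) (k : ℕ) ⟨0, k.pos⟩ k (by simp)
      omega
    have hge' : (k : ℕ) ≤ (Finset.orderEmbOfFin t.1 t.2 k : ℕ) := by
      have := aux_strictMono_add (phiFun_strictMono a b t) (k : ℕ) ⟨0, k.pos⟩ k (by simp)
      omega
    exact Fin.ext (by omega)
  apply Subtype.ext
  have hr : Set.range (Finset.orderEmbOfFin s.1 s.2) = Set.range (Finset.orderEmbOfFin t.1 t.2) := by
    ext x
    constructor
    · rintro ⟨k, rfl⟩; exact ⟨k, (hee k).symm⟩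
    · rintro ⟨k, rfl⟩; exact ⟨k, hee k⟩
  have h1 : (s.1 : Set (Fin (a + b))) = (t.1 : Set (Fin (a + b))) := by
    rw [← Finset.range_orderEmbOfFin s.1 s.2, ← Finset.range_orderEmbOfFin t.1 t.2]
    exact hr
  exact_mod_cast Finset.coe_inj.mp h1

lemma Phi_surjective (a b : ℕ) : Function.Surjective (Phi a b) := by
  rintro ⟨f, hf, hfb⟩
  have hg_lt : ∀ k : Fin a, f k.rev + (k : ℕ) < a + b := by
    intro k
    have h1 := hfb k.rev
    have h2 := k.2
    omega
  set g : Fin a → Fin (a + b) := fun k => ⟨f k.rev + (k : ℕ), hg_lt k⟩ with hg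
  have hgsm : StrictMono g := by
    intro i j hij
    have h1 : (j.rev : ℕ) ≤ (i.rev : ℕ) := by
      simp only [Fin.val_rev]
      have := Fin.lt_def.mp hij
      omega
    have h2 : f i.rev ≤ f j.rev := hf (Fin.le_def.mpr h1)
    have h3 : (i : ℕ) < (j : ℕ) := Fin.lt_def.mp hij
    simp only [hg, Fin.lt_def]
    omega
  set s : Finset (Fin (a + b)) := Finset.univ.map ⟨g, hgsm.injective⟩ with hs
  have hcard : s.card = a := by simp [hs]
  refine ⟨⟨s, hcard⟩, ?_⟩
  have hmem : ∀ x, g x ∈ s := by intro x; simp [hs]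
  have hgeq : g = ⇑(s.orderEmbOfFin hcard) :=
    Finset.orderEmbOfFin_unique hcard hmem hgsm
  apply Subtype.ext
  funext i
  show ((s.orderEmbOfFin hcard i.rev : Fin (a + b)) : ℕ) - (i.rev : ℕ) = f i
  rw [← hgeq]
  simp only [hg, Fin.rev_rev]
  omega

/-- The number of Young diagrams fitting inside the `a × b` rectangular box
(i.e. all of whose cells `(i,j)` satisfy `i < a` and `j < b`) equals the
binomial coefficient `C(a + b, a)`. -/
theorem card_young_in_box (a b : ℕ) :
    Nat.card {μ : YoungDiagram // ∀ c ∈ μ.cells, c.1 < a ∧ c.2 < b} =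
      Nat.choose (a + b) a := by
  rw [Nat.card_congr (boxEquiv a b)]
  rw [← Nat.card_eq_of_bijective (Phi a b) ⟨Phi_injective a b, Phi_surjective a b⟩]
  rw [Nat.card_eq_fintype_card]
  simpa only [Fintype.card_fin] using Fintype.card_finset_len (α := Fin (a + b)) a
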